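/- arXiv:2512.01866 — 2 statements merged into one kernel-verified Lean document; each statement's English description precedes it below -/
import Mathlib

section
/- Let K be a differential field of characteristic 0 and let 𝔭 be a nonzero prime differential ideal of the differential polynomial ring K{T} admitting minimal polynomials. Then any two minimal polynomials of 𝔭 differ by multiplication by a nonzero scalar of K, and 𝔭 contains no nonzero differential polynomial of order strictly less than the order of a minimal polynomial. -/
open MvPolynomial

namespace MinPolyAux

variable {K : Type*} [Field K]

private lemma sub_single_eq_iff {s u : ℕ →₀ ℕ} {n : ℕ} (h : s n ≠ 0) :
    s - Finsupp.single n 1 = u ↔ s = u + Finsupp.single n 1 := by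
  constructor
  · rintro rfl
    ext j
    simp only [Finsupp.add_apply, Finsupp.tsub_apply, Finsupp.single_apply]
    split_ifs with hj
    · subst hj; omega
    · omega
  · rintro rfl
    ext j
    simp only [Finsupp.add_apply, Finsupp.tsub_apply, Finsupp.single_apply]
    split_ifs with hj <;> omega

lemma coeff_pderiv (n : ℕ) (p : MvPolynomial ℕ K) (u : ℕ →₀ ℕ) :
    coeff u (pderiv n p) = ((u n + 1 : ℕ) : K) * coeff (u + Finsupp.single n 1) p := by
  induction p using MvPolynomial.induction_on' with
  | monomial s a =>
    rw [pderiv_monomial, coeff_monomial, coeff_monomial]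
    rcases eq_or_ne (s n) 0 with h0 | h0
    · have h1 : s ≠ u + Finsupp.single n 1 := by
        intro he
        rw [he] at h0
        simp [Finsupp.add_apply] at h0
      rw [if_neg h1, mul_zero]
      split_ifs with h2
      · rw [h0]; simp
      · rfl
    · rcases eq_or_ne (s - Finsupp.single n 1) u with h2 | h2
      · rw [if_pos h2, if_pos ((sub_single_eq_iff h0).mp h2)]
        have hsn : s n = u n + 1 := by
          rw [(sub_single_eq_iff h0).mp h2]
          simp [Finsupp.add_apply]
        rw [hsn]
        push_cast
        ring
      · rw [if_neg h2, if_neg fun he => h2 ((sub_single_eq_iff h0).mpr he), mul_zero]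
  | add p q hp hq => simp [hp, hq, mul_add]

lemma vars_pderiv_subset (n : ℕ) (p : MvPolynomial ℕ K) : (pderiv n p).vars ⊆ p.vars := by
  intro i hi
  rw [mem_vars] at hi ⊢
  obtain ⟨d, hd, hid⟩ := hi
  refine ⟨d + Finsupp.single n 1, ?_, ?_⟩
  · rw [mem_support_iff] at hd ⊢
    intro h
    apply hd
    rw [coeff_pderiv, h, mul_zero]
  · rw [Finsupp.mem_support_iff] at hid ⊢
    simp only [Finsupp.add_apply, Finsupp.single_apply]
    split_ifs <;> omega

lemma pderiv_ne_zero [CharZero K] {n : ℕ} {p : MvPolynomial ℕ K} (h : n ∈ p.vars) :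
    pderiv n p ≠ 0 := by
  rw [mem_vars] at h
  obtain ⟨d, hd, hnd⟩ := h
  rw [mem_support_iff] at hd
  rw [Finsupp.mem_support_iff] at hnd
  intro h0
  have hc := coeff_pderiv n p (d - Finsupp.single n 1)
  have hd' : d - Finsupp.single n 1 + Finsupp.single n 1 = d := by
    ext j
    simp only [Finsupp.add_apply, Finsupp.tsub_apply, Finsupp.single_apply]
    split_ifs with hj
    · subst hj; omega
    · omega
  rw [h0, coeff_zero, hd'] at hc
  rcases mul_eq_zero.mp hc.symm with h | h
  · exact Nat.cast_ne_zero.mpr (Nat.succ_ne_zero _) h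
  · exact hd h

noncomputable def phi (n : ℕ) : MvPolynomial ℕ K →+* Polynomial (MvPolynomial ℕ K) :=
  eval₂Hom (Polynomial.C.comp (C : K →+* MvPolynomial ℕ K))
    fun j => if j = n then Polynomial.X else Polynomial.C (X j)

noncomputable def psi (n : ℕ) : Polynomial (MvPolynomial ℕ K) →+* MvPolynomial ℕ K :=
  Polynomial.eval₂RingHom (RingHom.id _) (X n)

lemma psi_phi (n : ℕ) (p : MvPolynomial ℕ K) : psi n (phi n p) = p := by
  induction p using MvPolynomial.induction_on with
  | C c => simp [phi, psi]
  | add p q hp hq => rw [map_add, map_add, hp, hq]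
  | mul_X p i hp =>
    rw [map_mul, map_mul, hp]
    congr 1
    by_cases hi : i = n <;> simp [phi, psi, hi]

lemma phi_injective (n : ℕ) : Function.Injective (phi n (K := K)) := by
  intro a b h
  rw [← psi_phi n a, h, psi_phi]

lemma phi_X_self (n : ℕ) : phi n (X n : MvPolynomial ℕ K) = Polynomial.X := by simp [phi]

lemma phi_X_ne (n i : ℕ) (h : i ≠ n) :
    phi n (X i : MvPolynomial ℕ K) = Polynomial.C (X i) := by simp [phi, h]

lemma phi_pderiv (n : ℕ) (p : MvPolynomial ℕ K) :
    phi n (pderiv n p) = Polynomial.derivative (phi n p) := by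
  induction p using MvPolynomial.induction_on with
  | C c =>
    rw [pderiv_C, map_zero]
    have : phi n (C c : MvPolynomial ℕ K) = Polynomial.C (C c) := by simp [phi]
    rw [this, Polynomial.derivative_C]
  | add p q hp hq => rw [map_add, map_add, map_add, hp, hq, map_add]
  | mul_X p i hp =>
    rw [pderiv_mul, map_add, map_mul, map_mul, map_mul, hp]
    by_cases hi : i = n
    · subst hi
      rw [phi_X_self, pderiv_X_self, Polynomial.derivative_mul, Polynomial.derivative_X]
      simp
    · rw [phi_X_ne n i hi, pderiv_X_of_ne hi, Polynomial.derivative_mul,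
        Polynomial.derivative_C]
      simp

lemma phi_coeff_vars (n : ℕ) (p : MvPolynomial ℕ K) (j : ℕ) :
    n ∉ ((phi n p).coeff j).vars := by
  induction p using MvPolynomial.induction_on generalizing j with
  | C c =>
    have : phi n (C c : MvPolynomial ℕ K) = Polynomial.C (C c) := by simp [phi]
    rw [this, Polynomial.coeff_C]
    split_ifs
    · simp [vars_C]
    · simp
  | add p q hp hq =>
    rw [map_add, Polynomial.coeff_add]
    intro hmem
    rcases Finset.mem_union.mp (vars_add_subset _ _ hmem) with h | h
    · exact hp j h
    · exact hq j h
  | mul_X p i hp =>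
    rw [map_mul]
    by_cases hi : i = n
    · subst hi
      rw [phi_X_self]
      match j with
      | 0 =>
        rw [Polynomial.mul_coeff_zero, Polynomial.coeff_X_zero, mul_zero]
        simp
      | j + 1 =>
        rw [Polynomial.coeff_mul_X]
        exact hp j
    · rw [phi_X_ne n i hi, Polynomial.coeff_mul_C]
      intro hmem
      rcases Finset.mem_union.mp (vars_mul _ _ hmem) with h | h
      · exact hp j h
      · rw [vars_X] at h
        exact hi (Finset.mem_singleton.mp h).symm |>.elim
      -- h : n ∈ {i}  gives n = i, contradiction with hi : i ≠ n

lemma eq_C_of_isUnit {u : MvPolynomial ℕ K} (hu : IsUnit u) :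
    ∃ c : K, c ≠ 0 ∧ u = C c := by
  have hvars : ∀ i, i ∉ u.vars := by
    intro i
    have h1 : IsUnit (phi (K := K) i u) := hu.map _
    obtain ⟨r, -, hr⟩ := Polynomial.isUnit_iff.mp h1
    have hur : u = r := by
      rw [← psi_phi i u, ← hr]
      simp [psi]
    have h2 := phi_coeff_vars i u 0
    rw [← hr, Polynomial.coeff_C_zero] at h2
    rwa [hur]
  have hsupp : ∀ m ∈ u.support, m = 0 := by
    intro m hm
    by_contra hne
    obtain ⟨j, hj⟩ := Finsupp.ne_iff.mp hne
    simp only [Finsupp.coe_zero, Pi.zero_apply] at hj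
    exact hvars j ((mem_vars j).mpr ⟨m, hm, Finsupp.mem_support_iff.mpr hj⟩)
  refine ⟨coeff 0 u, ?_, ?_⟩
  · intro hc
    have : u ≠ 0 := hu.ne_zero
    apply this
    ext m
    rcases eq_or_ne m 0 with rfl | hm
    · simpa using hc
    · rw [coeff_zero]
      by_contra hcm
      exact hm (hsupp m (mem_support_iff.mpr hcm))
  · ext m
    rcases eq_or_ne m 0 with rfl | hm
    · simp [coeff_C]
    · rw [coeff_C, if_neg (by exact fun h => hm h.symm)]
      by_contra hcm
      exact hm (hsupp m (mem_support_iff.mpr hcm))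

lemma vars_bound_mul {p q : MvPolynomial ℕ K} {N : ℕ} (hp : ∀ i ∈ p.vars, i ≤ N)
    (hq : ∀ i ∈ q.vars, i ≤ N) : ∀ i ∈ (p * q).vars, i ≤ N := fun i hi => by
  rcases Finset.mem_union.mp (vars_mul _ _ hi) with h | h
  exacts [hp _ h, hq _ h]

lemma vars_bound_add {p q : MvPolynomial ℕ K} {N : ℕ} (hp : ∀ i ∈ p.vars, i ≤ N)
    (hq : ∀ i ∈ q.vars, i ≤ N) : ∀ i ∈ (p + q).vars, i ≤ N := fun i hi => by
  rcases Finset.mem_union.mp (vars_add_subset _ _ hi) with h | h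
  exacts [hp _ h, hq _ h]

lemma vars_bound_sub {p q : MvPolynomial ℕ K} {N : ℕ} (hp : ∀ i ∈ p.vars, i ≤ N)
    (hq : ∀ i ∈ q.vars, i ≤ N) : ∀ i ∈ (p - q).vars, i ≤ N := fun i hi => by
  rcases Finset.mem_union.mp (vars_sub_subset (p := p) (q := q) hi) with h | h
  exacts [hp _ h, hq _ h]

section D

variable (D : MvPolynomial ℕ K → MvPolynomial ℕ K)

lemma D_zero (hDadd : ∀ p q, D (p + q) = D p + D q) : D 0 = 0 := by
  have h := hDadd 0 0
  rw [add_zero] at h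
  nth_rewrite 1 [← add_zero (D 0)] at h
  exact (add_left_cancel h).symm

lemma D_sum (hDadd : ∀ p q, D (p + q) = D p + D q) {α : Type*} (s : Finset α)
    (f : α → MvPolynomial ℕ K) : D (∑ x ∈ s, f x) = ∑ x ∈ s, D (f x) := by
  classical
  induction s using Finset.induction_on with
  | empty => simpa using D_zero D hDadd
  | insert _ _ hx ih => rw [Finset.sum_insert hx, Finset.sum_insert hx, hDadd, ih]

lemma D_X_pow (hDmul : ∀ p q, D (p * q) = D p * q + p * D q)
    (hDX : ∀ i : ℕ, D (X i) = X (i + 1)) (a b : ℕ) :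
    D (X a ^ (b + 1)) = C ((b + 1 : ℕ) : K) * (X a ^ b * X (a + 1)) := by
  induction b with
  | zero => rw [pow_one, hDX, pow_zero]; simp
  | succ b ih =>
    rw [pow_succ, hDmul, ih, hDX,
      show ((b + 1 + 1 : ℕ) : K) = ((b + 1 : ℕ) : K) + 1 by push_cast; ring, map_add, C_1]
    ring

lemma pderiv_X_pow_self (N b : ℕ) :
    pderiv N ((X N : MvPolynomial ℕ K) ^ (b + 1)) = C ((b + 1 : ℕ) : K) * X N ^ b := by
  induction b with
  | zero => rw [pow_one, pderiv_X_self, pow_zero]; simp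
  | succ b ih =>
    rw [pow_succ, pderiv_mul, ih, pderiv_X_self,
      show ((b + 1 + 1 : ℕ) : K) = ((b + 1 : ℕ) : K) + 1 by push_cast; ring, map_add, C_1]
    ring

lemma pderiv_X_pow_ne (N a b : ℕ) (h : a ≠ N) :
    pderiv N ((X a : MvPolynomial ℕ K) ^ b) = 0 := by
  induction b with
  | zero => rw [pow_zero]; exact pderiv_one
  | succ b ih => rw [pow_succ, pderiv_mul, ih, pderiv_X_of_ne h, zero_mul, mul_zero, add_zero]

lemma Dmon (δ : K → K) (hDadd : ∀ p q, D (p + q) = D p + D q)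
    (hDmul : ∀ p q, D (p * q) = D p * q + p * D q)
    (hDC : ∀ c : K, D (C c) = C (δ c))
    (hDX : ∀ i : ℕ, D (X i) = X (i + 1)) (N : ℕ) (m : ℕ →₀ ℕ) (c : K) :
    (∀ i ∈ m.support, i ≤ N) →
      ∀ i ∈ (D (monomial m c) - pderiv N (monomial m c) * X (N + 1)).vars, i ≤ N := by
  rcases eq_or_ne c 0 with rfl | hc
  · intro _ i hi
    rw [monomial_zero, D_zero D hDadd, map_zero, zero_mul, sub_zero] at hi
    simp at hi
  induction m using Finsupp.induction with
  | zero =>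
    intro _ i hi
    rw [monomial_zero', hDC, pderiv_C, zero_mul, sub_zero, vars_C] at hi
    simp at hi
  | single_add a b m ha hb ih =>
    intro hm i hi
    have haN : a ≤ N := by
      refine hm a (Finsupp.mem_support_iff.mpr ?_)
      simp only [Finsupp.add_apply, Finsupp.single_eq_same]
      omega
    have hmN : ∀ j ∈ m.support, j ≤ N := by
      intro j hj
      refine hm j (Finsupp.mem_support_iff.mpr ?_)
      have := Finsupp.mem_support_iff.mp hj
      simp only [Finsupp.add_apply]
      omega
    obtain ⟨b', rfl⟩ : ∃ b', b = b' + 1 := ⟨b - 1, by omega⟩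
    rw [monomial_single_add] at hi
    have key : D (X a ^ (b' + 1) * monomial m c) -
        pderiv N (X a ^ (b' + 1) * monomial m c) * X (N + 1) =
        (D (X a ^ (b' + 1)) - pderiv N (X a ^ (b' + 1)) * X (N + 1)) * monomial m c +
          X a ^ (b' + 1) *
            (D (monomial m c) - pderiv N (monomial m c) * X (N + 1)) := by
      rw [hDmul, pderiv_mul]
      ring
    rw [key] at hi
    refine vars_bound_add (vars_bound_mul ?_ ?_) (vars_bound_mul ?_ (ih hmN)) i hi
    · -- vars of the bracket for X a ^ (b'+1)
      rcases eq_or_ne a N with rfl | hane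
      · intro j hj
        rw [D_X_pow D hDmul hDX, pderiv_X_pow_self] at hj
        have : C ((b' + 1 : ℕ) : K) * (X a ^ b' * X (a + 1)) -
            C ((b' + 1 : ℕ) : K) * X a ^ b' * X (a + 1) = 0 := by ring
        rw [this] at hj
        simp at hj
      · intro j hj
        rw [D_X_pow D hDmul hDX, pderiv_X_pow_ne N a _ hane, zero_mul, sub_zero] at hj
        have haN' : a + 1 ≤ N := by omega
        refine vars_bound_mul (N := N) ?_ (vars_bound_mul ?_ ?_) j hj
        · intro x hx; rw [vars_C] at hx; simp at hx
        · intro x hx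
          have hx' := vars_pow (X a : MvPolynomial ℕ K) b' hx
          rw [vars_X] at hx'
          have := Finset.mem_singleton.mp hx'
          omega
        · intro x hx
          rw [vars_X] at hx
          have := Finset.mem_singleton.mp hx
          omega
    · -- vars of monomial m c ⊆ m.support
      intro j hj
      rw [vars_monomial hc] at hj
      exact hmN j hj
    · intro j hj
      have h1 := vars_pow (X a : MvPolynomial ℕ K) (b' + 1) hj
      rw [vars_X] at h1
      have h2 : j = a := Finset.mem_singleton.mp h1
      omega

end D

example (N : ℕ) (p : MvPolynomial ℕ K) : p = ∑ v ∈ p.support, monomial v (coeff v p) := as_sum p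

-- Dstruct
lemma Dstruct (D : MvPolynomial ℕ K → MvPolynomial ℕ K)
    (DmonH : ∀ (N : ℕ) (m : ℕ →₀ ℕ) (c : K), (∀ i ∈ m.support, i ≤ N) →
      ∀ i ∈ (D (monomial m c) - pderiv N (monomial m c) * X (N + 1)).vars, i ≤ N)
    (hDadd : ∀ p q, D (p + q) = D p + D q)
    (N : ℕ) (p : MvPolynomial ℕ K) (hp : ∀ i ∈ p.vars, i ≤ N) :
    ∀ i ∈ (D p - pderiv N p * X (N + 1)).vars, i ≤ N := by
  have hsum : D p - pderiv N p * X (N + 1) =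
      ∑ m ∈ p.support, (D (monomial m (coeff m p)) -
        pderiv N (monomial m (coeff m p)) * X (N + 1)) := by
    conv_lhs => rw [as_sum p]
    rw [show D (∑ v ∈ p.support, monomial v (coeff v p)) =
        ∑ v ∈ p.support, D (monomial v (coeff v p)) by
      classical
      induction p.support using Finset.induction_on with
      | empty =>
        simp only [Finset.sum_empty]
        have h := hDadd 0 0
        rw [add_zero] at h
        nth_rewrite 1 [← add_zero (D 0)] at h
        exact (add_left_cancel h).symm
      | insert _ _ hx ih => rw [Finset.sum_insert hx, Finset.sum_insert hx, hDadd, ih]]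
    rw [map_sum, Finset.sum_mul, ← Finset.sum_sub_distrib]
  intro i hi
  rw [hsum] at hi
  obtain ⟨m, hm, him⟩ := Finset.mem_biUnion.mp (vars_sum_subset _ _ hi)
  exact DmonH N m (coeff m p) (fun j hj => hp j ((mem_vars j).mpr ⟨m, hm, hj⟩)) i him

noncomputable def auxV (D : MvPolynomial ℕ K → MvPolynomial ℕ K) (P : MvPolynomial ℕ K)
    (n : ℕ) : ℕ → Localization.Away (pderiv n P)
  | i =>
    if i ≤ n then algebraMap (MvPolynomial ℕ K) _ (X i)
    else -(IsLocalization.Away.invSelf (S := Localization.Away (pderiv n P)) (pderiv n P)) *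
      eval₂ ((algebraMap (MvPolynomial ℕ K) (Localization.Away (pderiv n P))).comp
          (C : K →+* MvPolynomial ℕ K))
        (fun j => if _ : j < i then auxV D P n j else 0)
        (D^[i - n] P - pderiv n P * X i)
  termination_by i => i

lemma auxV_le (D : MvPolynomial ℕ K → MvPolynomial ℕ K) (P : MvPolynomial ℕ K) {n i : ℕ}
    (h : i ≤ n) : auxV D P n i = algebraMap (MvPolynomial ℕ K) _ (X i) := by
  rw [auxV, if_pos h]

lemma auxV_gt (D : MvPolynomial ℕ K → MvPolynomial ℕ K) (P : MvPolynomial ℕ K) {n i : ℕ}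
    (h : ¬ i ≤ n) : auxV D P n i =
    -(IsLocalization.Away.invSelf (S := Localization.Away (pderiv n P)) (pderiv n P)) *
      eval₂ ((algebraMap (MvPolynomial ℕ K) (Localization.Away (pderiv n P))).comp
          (C : K →+* MvPolynomial ℕ K))
        (fun j => if _ : j < i then auxV D P n j else 0)
        (D^[i - n] P - pderiv n P * X i) := by
  rw [auxV, if_neg h]


theorem key [CharZero K]
    (δ : K → K)
    (D : MvPolynomial ℕ K → MvPolynomial ℕ K)
    (hDadd : ∀ p q, D (p + q) = D p + D q)
    (hDmul : ∀ p q, D (p * q) = D p * q + p * D q)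
    (hDC : ∀ c : K, D (MvPolynomial.C c) = MvPolynomial.C (δ c))
    (hDX : ∀ i : ℕ, D (MvPolynomial.X i) = MvPolynomial.X (i + 1))
    (𝔭 : Ideal (MvPolynomial ℕ K))
    (P : MvPolynomial ℕ K) (n : ℕ) (hPirr : Irreducible P)
    (hPord : (∀ i ∈ P.vars, i ≤ n) ∧ n ∈ P.vars)
    (hP : ∀ Q, Q ∈ 𝔭 ↔ ∃ k : ℕ,
      (MvPolynomial.pderiv n P) ^ k * Q ∈ Ideal.span (Set.range fun m => D^[m] P)) :
    P ∈ 𝔭 ∧ (∀ Q ∈ 𝔭, (∀ i ∈ Q.vars, i ≤ n) → P ∣ Q) ∧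
      ∀ Q ∈ 𝔭, Q ≠ 0 → ∃ i ∈ Q.vars, n ≤ i := by
  classical
  have hs0 : pderiv n P ≠ 0 := pderiv_ne_zero hPord.2
  have hPmem : P ∈ 𝔭 := (hP P).mpr ⟨0, by
    rw [pow_zero, one_mul]
    exact Ideal.subset_span ⟨0, rfl⟩⟩
  -- degree facts via phi
  have hphiP0 : phi n P ≠ 0 := fun h => hPirr.ne_zero (phi_injective n (by rw [h, map_zero]))
  have hphis0 : phi n (pderiv n P) ≠ 0 :=
    fun h => hs0 (phi_injective n (by rw [h, map_zero]))
  have hphiP_deg : (phi n P).natDegree ≠ 0 := by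
    intro h
    apply hphis0
    rw [phi_pderiv, Polynomial.eq_C_of_natDegree_eq_zero h, Polynomial.derivative_C]
  have hPnotdvds : ¬ P ∣ pderiv n P := by
    intro hdvd
    have h1 : phi n P ∣ phi n (pderiv n P) := map_dvd _ hdvd
    have h2 := Polynomial.natDegree_le_of_dvd h1 hphis0
    have h3 : (phi n (pderiv n P)).natDegree < (phi n P).natDegree := by
      rw [phi_pderiv]
      exact Polynomial.natDegree_derivative_lt hphiP_deg
    omega
  have hPprime : Prime P := UniqueFactorizationMonoid.irreducible_iff_prime.mp hPirr
  -- structure of iterated derivatives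
  have Dst := Dstruct D (Dmon D δ hDadd hDmul hDC hDX) hDadd
  have Dv : ∀ (N : ℕ) (p : MvPolynomial ℕ K), (∀ i ∈ p.vars, i ≤ N) →
      ∀ i ∈ (D p).vars, i ≤ N + 1 := by
    intro N p hp i hi
    rw [← sub_add_cancel (D p) (pderiv N p * X (N + 1))] at hi
    refine vars_bound_add (fun j hj => ?_) (vars_bound_mul (fun j hj => ?_) (fun j hj => ?_)) i hi
    · exact le_trans (Dst N p hp j hj) (by omega)
    · exact le_trans (hp j (vars_pderiv_subset N p hj)) (by omega)
    · rw [vars_X] at hj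
      have := Finset.mem_singleton.mp hj
      omega
  have hsvars : ∀ i ∈ (pderiv n P).vars, i ≤ n :=
    fun i hi => hPord.1 i (vars_pderiv_subset n P hi)
  have hiter : ∀ m : ℕ, ∀ i ∈ (D^[m + 1] P - pderiv n P * X (n + m + 1)).vars, i ≤ n + m := by
    intro m
    induction m with
    | zero =>
      intro i hi
      rw [Function.iterate_one] at hi
      exact Dst n P hPord.1 i hi
    | succ m ih =>
      have hE : D^[m + 1 + 1] P - pderiv n P * X (n + (m + 1) + 1)
          = D (D^[m + 1] P - pderiv n P * X (n + m + 1)) + D (pderiv n P) * X (n + m + 1) := by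
        rw [Function.iterate_succ_apply' D (m + 1) P]
        have hsplit : D (D^[m + 1] P) = D (D^[m + 1] P - pderiv n P * X (n + m + 1)) +
            D (pderiv n P * X (n + m + 1)) := by
          rw [← hDadd, sub_add_cancel]
        rw [hsplit, hDmul, hDX, show n + m + 1 + 1 = n + (m + 1) + 1 by ring]
        ring
      intro i hi
      rw [hE] at hi
      refine vars_bound_add (fun j hj => ?_) (vars_bound_mul (fun j hj => ?_) (fun j hj => ?_))
        i hi
      · have := Dv (n + m) _ ih j hj
        omega
      · have := Dv n (pderiv n P) hsvars j hj
        omega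
      · rw [vars_X] at hj
        have := Finset.mem_singleton.mp hj
        omega
  -- evaluation homomorphism
  set L := Localization.Away (pderiv n P) with hL
  set f : K →+* L := (algebraMap (MvPolynomial ℕ K) L).comp (C : K →+* MvPolynomial ℕ K)
    with hf
  set Φ : MvPolynomial ℕ K →+* L := eval₂Hom f (auxV D P n) with hΦ
  have hE1 : ∀ Q : MvPolynomial ℕ K, (∀ i ∈ Q.vars, i ≤ n) →
      Φ Q = algebraMap (MvPolynomial ℕ K) L Q := by
    intro Q hQv
    have h1 : algebraMap (MvPolynomial ℕ K) L Q =
        eval₂ f (fun j => algebraMap (MvPolynomial ℕ K) L (X j)) Q := by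
      conv_lhs => rw [← eval₂_eta Q]
      rw [eval₂_comp_left]
      rfl
    rw [h1]
    show eval₂ f (auxV D P n) Q = _
    refine eval₂_congr f _ _ fun {i c} hic hc => ?_
    have hiv : i ∈ Q.vars := (mem_vars i).mpr ⟨c, mem_support_iff.mpr hc, hic⟩
    exact auxV_le D P (hQv i hiv)
  have hE2 : ∀ m : ℕ, Φ (D^[m + 1] P) = 0 := by
    intro m
    have hi0 : ¬ n + m + 1 ≤ n := by omega
    have hsplit : D^[m + 1] P =
        (D^[m + 1] P - pderiv n P * X (n + m + 1)) + pderiv n P * X (n + m + 1) :=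
      (sub_add_cancel _ _).symm
    have hXval : Φ (X (n + m + 1)) = auxV D P n (n + m + 1) := by
      simp [hΦ]
    have hVgt := auxV_gt D P (n := n) hi0
    rw [show n + m + 1 - n = m + 1 by omega] at hVgt
    have hcong : eval₂ f (fun j => if _ : j < n + m + 1 then auxV D P n j else 0)
        (D^[m + 1] P - pderiv n P * X (n + m + 1)) =
        Φ (D^[m + 1] P - pderiv n P * X (n + m + 1)) := by
      show _ = eval₂ f (auxV D P n) _
      refine eval₂_congr f _ _ fun {i c} hic hc => ?_
      have hiv : i ≤ n + m := hiter m i ((mem_vars i).mpr ⟨c, mem_support_iff.mpr hc, hic⟩)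
      rw [dif_pos (by omega : i < n + m + 1)]
    have hsval : Φ (pderiv n P) = algebraMap (MvPolynomial ℕ K) L (pderiv n P) :=
      hE1 _ hsvars
    conv_lhs => rw [hsplit]
    rw [Φ.map_add, Φ.map_mul, hXval, hVgt, hcong, hsval]
    have hmi := IsLocalization.Away.mul_invSelf (S := L) (pderiv n P)
    set A := Φ (D^[m + 1] P - pderiv n P * X (n + m + 1))
    calc A + algebraMap (MvPolynomial ℕ K) L (pderiv n P) *
          (-(IsLocalization.Away.invSelf (S := L) (pderiv n P)) * A)
        = A * (1 - algebraMap (MvPolynomial ℕ K) L (pderiv n P) *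
            IsLocalization.Away.invSelf (S := L) (pderiv n P)) := by ring
      _ = 0 := by rw [hmi]; ring
  have hinj : Function.Injective (algebraMap (MvPolynomial ℕ K) L) :=
    IsLocalization.injective _ (powers_le_nonZeroDivisors_of_noZeroDivisors hs0)
  -- key divisibility
  have hKD : ∀ Q ∈ 𝔭, (∀ i ∈ Q.vars, i ≤ n) → P ∣ Q := by
    intro Q hQ hQv
    obtain ⟨k, hk⟩ := (hP Q).mp hQ
    obtain ⟨c, hsupp, hsum⟩ := Submodule.mem_span_set.mp hk
    have hΦmem : Φ (pderiv n P ^ k * Q) ∈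
        Ideal.span {algebraMap (MvPolynomial ℕ K) L P} := by
      rw [← hsum, Finsupp.sum, map_sum Φ]
      refine Ideal.sum_mem _ fun x hx => ?_
      rw [smul_eq_mul, Φ.map_mul]
      obtain ⟨m, hm⟩ := hsupp (Finset.mem_coe.mpr hx)
      match m, hm with
      | 0, hm =>
        have hm0 : P = x := by simpa using hm
        rw [← hm0, hE1 P hPord.1]
        exact Ideal.mul_mem_left _ _ (Ideal.subset_span rfl)
      | m + 1, hm =>
        have hm1 : D^[m + 1] P = x := by simpa using hm
        rw [← hm1, hE2 m, mul_zero]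
        exact Ideal.zero_mem _
    rw [Φ.map_mul] at hΦmem
    rw [Φ.map_pow] at hΦmem
    rw [hE1 _ hsvars] at hΦmem
    rw [hE1 Q hQv] at hΦmem
    obtain ⟨t, ht⟩ := Ideal.mem_span_singleton'.mp hΦmem
    obtain ⟨⟨r, sm⟩, hr⟩ := IsLocalization.surj (M := Submonoid.powers (pderiv n P)) t
    obtain ⟨j, hj⟩ := sm.2
    have heq : algebraMap (MvPolynomial ℕ K) L (P * r) =
        algebraMap (MvPolynomial ℕ K) L (pderiv n P ^ k * Q * pderiv n P ^ j) := by
      simp only [map_mul, map_pow]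
      calc algebraMap (MvPolynomial ℕ K) L P * algebraMap (MvPolynomial ℕ K) L r
          = algebraMap (MvPolynomial ℕ K) L P * (t * algebraMap (MvPolynomial ℕ K) L sm) := by
            rw [hr]
        _ = (t * algebraMap (MvPolynomial ℕ K) L P) * algebraMap (MvPolynomial ℕ K) L sm := by
            ring
        _ = (algebraMap (MvPolynomial ℕ K) L (pderiv n P)) ^ k *
              algebraMap (MvPolynomial ℕ K) L Q * algebraMap (MvPolynomial ℕ K) L sm := by
            rw [ht]
        _ = _ := by rw [← hj, map_pow]
    have heq' : P * r = pderiv n P ^ k * Q * pderiv n P ^ j := hinj heq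
    have hdvd : P ∣ pderiv n P ^ (k + j) * Q := ⟨r, by linear_combination -heq'⟩
    rcases hPprime.dvd_mul.mp hdvd with h | h
    · exact absurd (hPprime.dvd_of_dvd_pow h) hPnotdvds
    · exact h
  -- descent
  have hdescent : ∀ d : ℕ, ∀ R : MvPolynomial ℕ K, (phi n R).natDegree ≤ d → ∀ j : ℕ,
      C ((j : K) + 1) * pderiv n P * R + P * pderiv n R = 0 → R = 0 := by
    intro d
    induction d using Nat.strong_induction_on with
    | _ d ihd =>
      intro R hdeg j heq
      by_cases hR : R = 0
      · exact hR
      have hPdvd : P ∣ C ((j : K) + 1) * pderiv n P * R := ⟨-pderiv n R, by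
        linear_combination heq⟩
      have hPR : P ∣ R := by
        rcases hPprime.dvd_mul.mp hPdvd with h | h
        · rcases hPprime.dvd_mul.mp h with h' | h'
          · have hunit : IsUnit (C ((j : K) + 1) : MvPolynomial ℕ K) :=
              (isUnit_iff_ne_zero.mpr (Nat.cast_add_one_ne_zero j)).map
                (C : K →+* MvPolynomial ℕ K)
            exact absurd (isUnit_of_dvd_unit h' hunit) hPirr.not_isUnit
          · exact absurd h' hPnotdvds
        · exact h
      obtain ⟨R₁, rfl⟩ := hPR
      by_cases hR₁ : R₁ = 0
      · rw [hR₁, mul_zero]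
      have heq₁ : C (((j + 1 : ℕ) : K) + 1) * pderiv n P * R₁ + P * pderiv n R₁ = 0 := by
        have hexp : P * (C (((j + 1 : ℕ) : K) + 1) * pderiv n P * R₁ + P * pderiv n R₁) = 0 := by
          rw [pderiv_mul] at heq
          push_cast
          rw [map_add, C_1]
          linear_combination heq
        rcases mul_eq_zero.mp hexp with h | h
        · exact absurd h hPirr.ne_zero
        · exact h
      have hR₁0 : phi n R₁ ≠ 0 := fun h => hR₁ (phi_injective n (by rw [h, map_zero]))
      have hd₁ : (phi n R₁).natDegree < d := by
        have h1 : (phi n (P * R₁)).natDegree = (phi n P).natDegree + (phi n R₁).natDegree := by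
          rw [map_mul]
          exact Polynomial.natDegree_mul hphiP0 hR₁0
        rw [h1] at hdeg
        omega
      exact absurd (ihd _ hd₁ R₁ le_rfl (j + 1) heq₁) hR₁
  refine ⟨hPmem, hKD, ?_⟩
  intro Q hQ hQ0
  by_contra hcon
  push_neg at hcon
  have hQv : ∀ i ∈ Q.vars, i ≤ n := fun i hi => le_of_lt (hcon i hi)
  obtain ⟨R, rfl⟩ := hKD Q hQ hQv
  have hnv : n ∉ (P * R).vars := fun h => lt_irrefl n (hcon n h)
  have hpd : pderiv n (P * R) = 0 := pderiv_eq_zero_of_notMem_vars hnv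
  rw [pderiv_mul] at hpd
  have heq0 : C (((0 : ℕ) : K) + 1) * pderiv n P * R + P * pderiv n R = 0 := by
    rw [Nat.cast_zero, zero_add, C_1, one_mul]
    linear_combination hpd
  have hR0 := hdescent _ R le_rfl 0 heq0
  exact hQ0 (by rw [hR0, mul_zero])


end MinPolyAux

/-- Any two minimal polynomials of a nonzero prime differential ideal `𝔭` of `K{T}` differ by
a nonzero scalar of `K` (in particular they have the same order `n`), and `𝔭` contains no
nonzero differential polynomial of order strictly less than `n`.  Here `K{T}` is realized as
`MvPolynomial ℕ K` with `X i` standing for `T⁽ⁱ⁾`, `D` is the derivation extending `δ` with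
`D (X i) = X (i+1)`, and a minimal polynomial of `𝔭` is an irreducible `P` of order `n` with
`𝔭 = I(P) = {Q | s_P ^ k * Q ∈ (P)_δ for some k}` where `s_P = ∂P/∂X n` is the separant and
`(P)_δ` is the differential ideal generated by `P`. -/
theorem minimal_polynomial_of_prime_differential_ideal_unique
    {K : Type*} [Field K] [CharZero K]
    (δ : K → K)
    (hδadd : ∀ x y, δ (x + y) = δ x + δ y)
    (hδmul : ∀ x y, δ (x * y) = δ x * y + x * δ y)
    (D : MvPolynomial ℕ K → MvPolynomial ℕ K)
    (hDadd : ∀ p q, D (p + q) = D p + D q)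
    (hDmul : ∀ p q, D (p * q) = D p * q + p * D q)
    (hDC : ∀ c : K, D (MvPolynomial.C c) = MvPolynomial.C (δ c))
    (hDX : ∀ i : ℕ, D (MvPolynomial.X i) = MvPolynomial.X (i + 1))
    (𝔭 : Ideal (MvPolynomial ℕ K)) (h𝔭prime : 𝔭.IsPrime) (h𝔭ne : 𝔭 ≠ ⊥)
    (h𝔭diff : ∀ p ∈ 𝔭, D p ∈ 𝔭)
    (P P₁ : MvPolynomial ℕ K) (n n₁ : ℕ)
    (hPirr : Irreducible P) (hP₁irr : Irreducible P₁)
    (hPord : (∀ i ∈ P.vars, i ≤ n) ∧ n ∈ P.vars)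
    (hP₁ord : (∀ i ∈ P₁.vars, i ≤ n₁) ∧ n₁ ∈ P₁.vars)
    (hP : ∀ Q, Q ∈ 𝔭 ↔ ∃ k : ℕ,
      (MvPolynomial.pderiv n P) ^ k * Q ∈ Ideal.span (Set.range fun m => D^[m] P))
    (hP₁ : ∀ Q, Q ∈ 𝔭 ↔ ∃ k : ℕ,
      (MvPolynomial.pderiv n₁ P₁) ^ k * Q ∈ Ideal.span (Set.range fun m => D^[m] P₁)) :
    (∃ c : K, c ≠ 0 ∧ P₁ = MvPolynomial.C c * P) ∧
    n = n₁ ∧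
    ∀ Q ∈ 𝔭, Q ≠ 0 → ∃ i ∈ Q.vars, n ≤ i := by
  obtain ⟨hPmem, hKD, hlow⟩ :=
    MinPolyAux.key δ D hDadd hDmul hDC hDX 𝔭 P n hPirr hPord hP
  obtain ⟨hP₁mem, hKD₁, hlow₁⟩ :=
    MinPolyAux.key δ D hDadd hDmul hDC hDX 𝔭 P₁ n₁ hP₁irr hP₁ord hP₁
  have hnn₁ : n = n₁ := by
    obtain ⟨i, hi, hni⟩ := hlow₁ P hPmem hPirr.ne_zero
    obtain ⟨i', hi', hni'⟩ := hlow P₁ hP₁mem hP₁irr.ne_zero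
    have h1 := hPord.1 i hi
    have h2 := hP₁ord.1 i' hi'
    omega
  refine ⟨?_, hnn₁, hlow⟩
  have hdvd : P ∣ P₁ := hKD P₁ hP₁mem fun i hi => by
    have := hP₁ord.1 i hi
    omega
  obtain ⟨u, hu⟩ := hdvd
  have huunit : IsUnit u := by
    rcases hP₁irr.isUnit_or_isUnit hu with h | h
    · exact absurd h hPirr.not_isUnit
    · exact h
  obtain ⟨c, hc0, hc⟩ := MinPolyAux.eq_C_of_isUnit huunit
  exact ⟨c, hc0, by rw [hu, hc, mul_comm]⟩
end

section
/- Let k ⊆ K and k ⊆ L be field extensions inside a common field M, with k algebraically closed in the relevant sense that K and L are linearly disjoint over k. Suppose δ is a derivation on K and δ_L is a derivation on L whose restrictions to k coincide. Then there is a unique derivation on the compositum K·L ⊆ M extending both δ and δ_L, and it satisfies δ̃(a·b) = δ(a)·b + a·δ_L(b) for all a ∈ K and b ∈ L. -/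
open Finset

namespace CompositumDeriv

variable {M : Type*} [Field M]

/-- `x` is a finite sum `∑ aᵢ bᵢ` with `aᵢ ∈ K`, `bᵢ ∈ L`, and `y` is the corresponding
formal derivative. -/
def RD (K L : Subfield M) (δK : K → K) (δL : L → L) (x y : M) : Prop :=
  ∃ (n : ℕ) (a : Fin n → K) (b : Fin n → L),
    (∑ i, (a i : M) * (b i : M)) = x ∧
    (∑ i, ((δK (a i) : M) * (b i : M) + (a i : M) * (δL (b i) : M))) = y

variable {K L : Subfield M} {δK : K → K} {δL : L → L}

lemma deriv_zero (hadd : ∀ x y : K, δK (x + y) = δK x + δK y) : δK 0 = 0 := by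
  have := hadd 0 0
  rw [add_zero] at this
  exact right_eq_add.mp this

lemma deriv_neg (hadd : ∀ x y : K, δK (x + y) = δK x + δK y) (x : K) : δK (-x) = -δK x := by
  have h := hadd x (-x)
  rw [add_neg_cancel, deriv_zero hadd] at h
  exact (neg_eq_of_add_eq_zero_right h.symm).symm

lemma deriv_one (hmul : ∀ x y : K, δK (x * y) = δK x * y + x * δK y) : δK 1 = 0 := by
  have h := hmul 1 1
  rw [mul_one, mul_one, one_mul] at h
  exact right_eq_add.mp h

lemma rd_mem_left {x y : M} (h : RD K L δK δL x y) : x ∈ K ⊔ L := by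
  obtain ⟨n, a, b, hx, -⟩ := h
  rw [← hx]
  exact sum_mem fun i _ => mul_mem ((le_sup_left : K ≤ K ⊔ L) (a i).2)
    ((le_sup_right : L ≤ K ⊔ L) (b i).2)

lemma rd_mem_right {x y : M} (h : RD K L δK δL x y) : y ∈ K ⊔ L := by
  obtain ⟨n, a, b, -, hy⟩ := h
  rw [← hy]
  exact sum_mem fun i _ => add_mem
    (mul_mem ((le_sup_left : K ≤ K ⊔ L) (δK (a i)).2) ((le_sup_right : L ≤ K ⊔ L) (b i).2))
    (mul_mem ((le_sup_left : K ≤ K ⊔ L) (a i).2) ((le_sup_right : L ≤ K ⊔ L) (δL (b i)).2))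

lemma rd_single (a : K) (b : L) :
    RD K L δK δL ((a : M) * b) ((δK a : M) * b + (a : M) * (δL b : M)) :=
  ⟨1, fun _ => a, fun _ => b, by simp, by simp⟩

lemma rd_add {x y x' y' : M} (h : RD K L δK δL x y) (h' : RD K L δK δL x' y') :
    RD K L δK δL (x + x') (y + y') := by
  obtain ⟨n, a, b, hx, hy⟩ := h
  obtain ⟨m, a', b', hx', hy'⟩ := h'
  refine ⟨n + m, Fin.addCases a a', Fin.addCases b b', ?_, ?_⟩ <;>
    rw [Fin.sum_univ_add] <;> simp [hx, hy, hx', hy']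

lemma rd_neg (hadd : ∀ x y : K, δK (x + y) = δK x + δK y) {x y : M} (h : RD K L δK δL x y) :
    RD K L δK δL (-x) (-y) := by
  obtain ⟨n, a, b, hx, hy⟩ := h
  refine ⟨n, fun i => -a i, b, ?_, ?_⟩
  · rw [← hx, ← Finset.sum_neg_distrib]
    exact Finset.sum_congr rfl fun i _ => by push_cast; ring
  · rw [← hy, ← Finset.sum_neg_distrib]
    refine Finset.sum_congr rfl fun i _ => ?_
    rw [deriv_neg hadd]
    push_cast
    ring

lemma rd_mul (hKmul : ∀ x y : K, δK (x * y) = δK x * y + x * δK y)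
    (hLmul : ∀ x y : L, δL (x * y) = δL x * y + x * δL y)
    {x y x' y' : M} (h : RD K L δK δL x y) (h' : RD K L δK δL x' y') :
    RD K L δK δL (x * x') (x * y' + y * x') := by
  obtain ⟨n, a, b, hx, hy⟩ := h
  obtain ⟨m, a', b', hx', hy'⟩ := h'
  set e : Fin n × Fin m ≃ Fin (n * m) := finProdFinEquiv
  refine ⟨n * m, fun i => a (e.symm i).1 * a' (e.symm i).2,
    fun i => b (e.symm i).1 * b' (e.symm i).2, ?_, ?_⟩
  · calc ∑ i : Fin (n * m),
          ((a (e.symm i).1 * a' (e.symm i).2 : K) : M) * ((b (e.symm i).1 * b' (e.symm i).2 : L) : M)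
        = ∑ i : Fin (n * m), ((a (e.symm i).1 : M) * b (e.symm i).1) *
            ((a' (e.symm i).2 : M) * b' (e.symm i).2) :=
          Finset.sum_congr rfl fun i _ => by push_cast; ring
      _ = ∑ p : Fin n × Fin m, ((a p.1 : M) * b p.1) * ((a' p.2 : M) * b' p.2) :=
          Equiv.sum_comp e.symm (fun p : Fin n × Fin m => ((a p.1 : M) * b p.1) * ((a' p.2 : M) * b' p.2))
      _ = (∑ i, (a i : M) * b i) * (∑ j, (a' j : M) * b' j) := by
          rw [Finset.sum_mul_sum, Fintype.sum_prod_type]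
      _ = x * x' := by rw [hx, hx']
  · calc ∑ i : Fin (n * m),
          ((δK (a (e.symm i).1 * a' (e.symm i).2) : M) * ((b (e.symm i).1 * b' (e.symm i).2 : L) : M)
            + ((a (e.symm i).1 * a' (e.symm i).2 : K) : M) * (δL (b (e.symm i).1 * b' (e.symm i).2) : M))
        = ∑ i : Fin (n * m),
            (((a (e.symm i).1 : M) * b (e.symm i).1) *
              ((δK (a' (e.symm i).2) : M) * b' (e.symm i).2 + (a' (e.symm i).2 : M) * δL (b' (e.symm i).2))
            + ((δK (a (e.symm i).1) : M) * b (e.symm i).1 + (a (e.symm i).1 : M) * δL (b (e.symm i).1)) *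
              ((a' (e.symm i).2 : M) * b' (e.symm i).2)) :=
          Finset.sum_congr rfl fun i _ => by rw [hKmul, hLmul]; push_cast; ring
      _ = ∑ p : Fin n × Fin m,
            (((a p.1 : M) * b p.1) * ((δK (a' p.2) : M) * b' p.2 + (a' p.2 : M) * δL (b' p.2))
            + ((δK (a p.1) : M) * b p.1 + (a p.1 : M) * δL (b p.1)) * ((a' p.2 : M) * b' p.2)) :=
          Equiv.sum_comp e.symm (fun p : Fin n × Fin m =>
            ((a p.1 : M) * b p.1) * ((δK (a' p.2) : M) * b' p.2 + (a' p.2 : M) * δL (b' p.2))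
            + ((δK (a p.1) : M) * b p.1 + (a p.1 : M) * δL (b p.1)) * ((a' p.2 : M) * b' p.2))
      _ = (∑ i, (a i : M) * b i) * (∑ j, ((δK (a' j) : M) * b' j + (a' j : M) * δL (b' j)))
          + (∑ i, ((δK (a i) : M) * b i + (a i : M) * δL (b i))) * (∑ j, (a' j : M) * b' j) := by
          rw [Finset.sum_add_distrib]
          congr 1 <;> rw [Finset.sum_mul_sum, Fintype.sum_prod_type]
      _ = x * y' + y * x' := by rw [hx, hy, hx', hy']

lemma core {k : Subfield M} (hkK : k ≤ K) (hkL : k ≤ L)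
    (hdisj : ∀ (n : ℕ) (v : Fin n → M), (∀ i, v i ∈ K) →
      (∀ c : Fin n → M, (∀ i, c i ∈ k) → ∑ i, c i * v i = 0 → ∀ i, c i = 0) →
      ∀ c : Fin n → M, (∀ i, c i ∈ L) → ∑ i, c i * v i = 0 → ∀ i, c i = 0)
    (hKadd : ∀ x y : K, δK (x + y) = δK x + δK y)
    (hKmul : ∀ x y : K, δK (x * y) = δK x * y + x * δK y)
    (hLadd : ∀ x y : L, δL (x + y) = δL x + δL y)
    (hLmul : ∀ x y : L, δL (x * y) = δL x * y + x * δL y)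
    (hcompat : ∀ (x : M) (hx : x ∈ k), (δK ⟨x, hkK hx⟩ : M) = (δL ⟨x, hkL hx⟩ : M)) :
    ∀ (n : ℕ) (a : Fin n → K) (b : Fin n → L),
      (∑ i, (a i : M) * (b i : M)) = 0 →
      (∑ i, ((δK (a i) : M) * (b i : M) + (a i : M) * (δL (b i) : M))) = 0 := by
  intro n
  induction n using Nat.strong_induction_on with
  | _ n IH =>
  intro a b hab
  by_cases hind : ∀ c : Fin n → M, (∀ i, c i ∈ k) → ∑ i, c i * (a i : M) = 0 → ∀ i, c i = 0
  · -- the aᵢ are linearly independent over k, hence over L, so all bᵢ = 0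
    have hb := hdisj n (fun i => (a i : M)) (fun i => (a i).2) hind (fun i => (b i : M))
      (fun i => (b i).2) (by rw [← hab]; exact Finset.sum_congr rfl fun i _ => mul_comm _ _)
    have hb' : ∀ i, b i = 0 := fun i => Subtype.ext (hb i)
    refine Finset.sum_eq_zero fun i _ => ?_
    rw [hb' i, deriv_zero hLadd]
    push_cast
    ring
  · push_neg at hind
    obtain ⟨c, hck, hcsum, i0, hi0⟩ := hind
    obtain ⟨m, rfl⟩ : ∃ m, n = m + 1 := ⟨n - 1, by have := i0.pos; omega⟩
    set e : Equiv.Perm (Fin (m + 1)) := Equiv.swap i0 (Fin.last m) with he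
    have helast : e (Fin.last m) = i0 := Equiv.swap_apply_right _ _
    have hclast : c (e (Fin.last m)) ≠ 0 := by rw [helast]; exact hi0
    -- transported hypotheses
    have habE : ∑ i, (a (e i) : M) * (b (e i) : M) = 0 := by
      rw [Equiv.sum_comp e (fun i => (a i : M) * (b i : M))]; exact hab
    have hcsumE : ∑ i, c (e i) * (a (e i) : M) = 0 := by
      rw [Equiv.sum_comp e (fun i => c i * (a i : M))]; exact hcsum
    -- the coefficients
    set t : Fin m → M := fun i => c (e i.castSucc) / c (e (Fin.last m)) with ht
    have htk : ∀ i, t i ∈ k := fun i => div_mem (hck _) (hck _)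
    set dK : Fin m → K := fun i => ⟨t i, hkK (htk i)⟩ with hdK
    set dL : Fin m → L := fun i => ⟨t i, hkL (htk i)⟩ with hdL
    -- the dependence relation, M-level
    have hrel : (a (e (Fin.last m)) : M) + ∑ i : Fin m, t i * (a (e i.castSucc) : M) = 0 := by
      have h2 : c (e (Fin.last m)) *
          ((a (e (Fin.last m)) : M) + ∑ i : Fin m, t i * (a (e i.castSucc) : M)) = 0 := by
        rw [mul_add, Finset.mul_sum]
        have hterm : ∀ i : Fin m, c (e (Fin.last m)) * (t i * (a (e i.castSucc) : M)) =
            c (e i.castSucc) * (a (e i.castSucc) : M) := by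
          intro i
          rw [ht]
          field_simp
        rw [Finset.sum_congr rfl fun i _ => hterm i]
        rw [Fin.sum_univ_castSucc (fun i => c (e i) * (a (e i) : M))] at hcsumE
        linear_combination hcsumE
      exact (mul_eq_zero.mp h2).resolve_left hclast
    -- the dependence relation, K-level
    have hrelK : a (e (Fin.last m)) + ∑ i : Fin m, dK i * a (e i.castSucc) = 0 := by
      apply Subtype.ext
      push_cast
      exact hrel
    -- derivative of the relation
    have h0 : δK (a (e (Fin.last m))) + ∑ i : Fin m, δK (dK i * a (e i.castSucc)) = 0 := by
      have hsum : δK (∑ i : Fin m, dK i * a (e i.castSucc)) =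
          ∑ i : Fin m, δK (dK i * a (e i.castSucc)) :=
        map_sum (AddMonoidHom.mk' δK hKadd) _ univ
      rw [← hsum, ← hKadd, hrelK, deriv_zero hKadd]
    have h0' : δK (a (e (Fin.last m))) +
        ∑ i : Fin m, (δK (dK i) * a (e i.castSucc) + dK i * δK (a (e i.castSucc))) = 0 := by
      rw [← Finset.sum_congr rfl fun i _ => hKmul (dK i) (a (e i.castSucc))]
      exact h0
    have hKder : (δK (a (e (Fin.last m))) : M) +
        ∑ i : Fin m, ((δK (dK i) : M) * (a (e i.castSucc) : M)
          + t i * (δK (a (e i.castSucc)) : M)) = 0 := by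
      have h1 := congrArg (Subtype.val) h0'
      push_cast at h1
      exact h1
    -- modified second family
    set b' : Fin m → L := fun i => b (e i.castSucc) - dL i * b (e (Fin.last m)) with hb'
    have hb'sum : ∑ i : Fin m, (a (e i.castSucc) : M) * (b' i : M) = 0 := by
      have hterm : ∀ i : Fin m, (a (e i.castSucc) : M) * (b' i : M) =
          (a (e i.castSucc) : M) * (b (e i.castSucc) : M)
            - (t i * (a (e i.castSucc) : M)) * (b (e (Fin.last m)) : M) := by
        intro i
        rw [hb']
        push_cast
        ring
      rw [Finset.sum_congr rfl fun i _ => hterm i, Finset.sum_sub_distrib, ← Finset.sum_mul]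
      rw [Fin.sum_univ_castSucc (fun i => (a (e i) : M) * (b (e i) : M))] at habE
      linear_combination habE - (b (e (Fin.last m)) : M) * hrel
    have hIH := IH m (Nat.lt_succ_self m) (fun i => a (e i.castSucc)) b' hb'sum
    -- expansion of δL (b (e i.castSucc))
    have hδb' : ∀ i : Fin m, (δL (b (e i.castSucc)) : M) =
        (δL (b' i) : M) + (δL (dL i) : M) * (b (e (Fin.last m)) : M)
          + t i * (δL (b (e (Fin.last m))) : M) := by
      intro i
      have hBi : b (e i.castSucc) = b' i + dL i * b (e (Fin.last m)) := by
        rw [hb']; ring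
      rw [hBi, hLadd, hLmul]
      push_cast
      ring
    have hcomp' : ∀ i : Fin m, (δK (dK i) : M) = (δL (dL i) : M) := fun i =>
      hcompat (t i) (htk i)
    -- the termwise key identity
    have key : ∀ i : Fin m,
        (δK (a (e i.castSucc)) : M) * (b (e i.castSucc) : M)
          + (a (e i.castSucc) : M) * (δL (b (e i.castSucc)) : M) =
        ((δK (a (e i.castSucc)) : M) * (b' i : M) + (a (e i.castSucc) : M) * (δL (b' i) : M))
          + ((δK (dK i) : M) * (a (e i.castSucc) : M)
              + t i * (δK (a (e i.castSucc)) : M)) * (b (e (Fin.last m)) : M)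
          + (t i * (a (e i.castSucc) : M)) * (δL (b (e (Fin.last m))) : M) := by
      intro i
      have hBiM : (b (e i.castSucc) : M) = (b' i : M) + t i * (b (e (Fin.last m)) : M) := by
        rw [hb']; push_cast; ring
      rw [hδb' i, hBiM, hcomp' i]
      ring
    -- final computation
    rw [← Equiv.sum_comp e (fun i => (δK (a i) : M) * (b i : M) + (a i : M) * (δL (b i) : M))]
    rw [Fin.sum_univ_castSucc
      (fun i => (δK (a (e i)) : M) * (b (e i) : M) + (a (e i) : M) * (δL (b (e i)) : M))]
    rw [Finset.sum_congr rfl fun i _ => key i]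
    rw [Finset.sum_add_distrib, Finset.sum_add_distrib, ← Finset.sum_mul, ← Finset.sum_mul]
    linear_combination hIH + (b (e (Fin.last m)) : M) * hKder
      + (δL (b (e (Fin.last m))) : M) * hrel

lemma rd_zero : RD K L δK δL 0 0 :=
  ⟨0, Fin.elim0, Fin.elim0, by simp, by simp⟩

lemma rd_one (hKmul : ∀ x y : K, δK (x * y) = δK x * y + x * δK y)
    (hLmul : ∀ x y : L, δL (x * y) = δL x * y + x * δL y) :
    RD K L δK δL 1 0 :=
  ⟨1, fun _ => 1, fun _ => 1, by simp, by simp [deriv_one hKmul, deriv_one hLmul]⟩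

lemma rd_K (hLmul : ∀ x y : L, δL (x * y) = δL x * y + x * δL y) (a : K) :
    RD K L δK δL (a : M) (δK a : M) :=
  ⟨1, fun _ => a, fun _ => 1, by simp, by simp [deriv_one hLmul]⟩

lemma rd_L (hKmul : ∀ x y : K, δK (x * y) = δK x * y + x * δK y) (b : L) :
    RD K L δK δL (b : M) (δL b : M) :=
  ⟨1, fun _ => 1, fun _ => b, by simp, by simp [deriv_one hKmul]⟩

lemma rd_unique {k : Subfield M} (hkK : k ≤ K) (hkL : k ≤ L)
    (hdisj : ∀ (n : ℕ) (v : Fin n → M), (∀ i, v i ∈ K) →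
      (∀ c : Fin n → M, (∀ i, c i ∈ k) → ∑ i, c i * v i = 0 → ∀ i, c i = 0) →
      ∀ c : Fin n → M, (∀ i, c i ∈ L) → ∑ i, c i * v i = 0 → ∀ i, c i = 0)
    (hKadd : ∀ x y : K, δK (x + y) = δK x + δK y)
    (hKmul : ∀ x y : K, δK (x * y) = δK x * y + x * δK y)
    (hLadd : ∀ x y : L, δL (x + y) = δL x + δL y)
    (hLmul : ∀ x y : L, δL (x * y) = δL x * y + x * δL y)
    (hcompat : ∀ (x : M) (hx : x ∈ k), (δK ⟨x, hkK hx⟩ : M) = (δL ⟨x, hkL hx⟩ : M))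
    {x y y' : M} (h : RD K L δK δL x y) (h' : RD K L δK δL x y') : y = y' := by
  have h0 := rd_add h (rd_neg hKadd h')
  rw [add_neg_cancel] at h0
  obtain ⟨n, a, b, hx0, hy0⟩ := h0
  have hz := core hkK hkL hdisj hKadd hKmul hLadd hLmul hcompat n a b hx0
  rw [hy0] at hz
  linear_combination hz

/-- The full relation on the compositum: `y` is the derivative of `x = s/t`. -/
def FD (K L : Subfield M) (δK : K → K) (δL : L → L) (x y : M) : Prop :=
  ∃ s t ds dt : M, RD K L δK δL s ds ∧ RD K L δK δL t dt ∧ t ≠ 0 ∧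
    x = s / t ∧ y = (ds * t - s * dt) / t ^ 2

lemma fd_of_rd (hKmul : ∀ x y : K, δK (x * y) = δK x * y + x * δK y)
    (hLmul : ∀ x y : L, δL (x * y) = δL x * y + x * δL y)
    {x y : M} (h : RD K L δK δL x y) : FD K L δK δL x y :=
  ⟨x, 1, y, 0, h, rd_one hKmul hLmul, one_ne_zero, by simp, by simp⟩

lemma fd_mem_left {x y : M} (h : FD K L δK δL x y) : x ∈ K ⊔ L := by
  obtain ⟨s, t, ds, dt, hs, ht, -, rfl, -⟩ := h
  exact div_mem (rd_mem_left hs) (rd_mem_left ht)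

lemma fd_mem_right {x y : M} (h : FD K L δK δL x y) : y ∈ K ⊔ L := by
  obtain ⟨s, t, ds, dt, hs, ht, -, -, rfl⟩ := h
  exact div_mem (sub_mem (mul_mem (rd_mem_right hs) (rd_mem_left ht))
    (mul_mem (rd_mem_left hs) (rd_mem_right ht))) (pow_mem (rd_mem_left ht) 2)

lemma fd_add (hKmul : ∀ x y : K, δK (x * y) = δK x * y + x * δK y)
    (hLmul : ∀ x y : L, δL (x * y) = δL x * y + x * δL y)
    {x y x' y' : M} (h : FD K L δK δL x y) (h' : FD K L δK δL x' y') :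
    FD K L δK δL (x + x') (y + y') := by
  obtain ⟨s, t, ds, dt, hs, ht, htne, rfl, rfl⟩ := h
  obtain ⟨s', t', ds', dt', hs', ht', htne', rfl, rfl⟩ := h'
  refine ⟨s * t' + s' * t, t * t',
    (s * dt' + ds * t') + (s' * dt + ds' * t), t * dt' + dt * t',
    rd_add (rd_mul hKmul hLmul hs ht') (rd_mul hKmul hLmul hs' ht),
    rd_mul hKmul hLmul ht ht', mul_ne_zero htne htne', by field_simp; try ring,
    by field_simp; try ring⟩

lemma fd_mul (hKmul : ∀ x y : K, δK (x * y) = δK x * y + x * δK y)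
    (hLmul : ∀ x y : L, δL (x * y) = δL x * y + x * δL y)
    {x y x' y' : M} (h : FD K L δK δL x y) (h' : FD K L δK δL x' y') :
    FD K L δK δL (x * x') (x * y' + y * x') := by
  obtain ⟨s, t, ds, dt, hs, ht, htne, rfl, rfl⟩ := h
  obtain ⟨s', t', ds', dt', hs', ht', htne', rfl, rfl⟩ := h'
  refine ⟨s * s', t * t', s * ds' + ds * s', t * dt' + dt * t',
    rd_mul hKmul hLmul hs hs', rd_mul hKmul hLmul ht ht',
    mul_ne_zero htne htne', by field_simp, by field_simp; ring⟩

lemma fd_neg (hKadd : ∀ x y : K, δK (x + y) = δK x + δK y)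
    {x y : M} (h : FD K L δK δL x y) : FD K L δK δL (-x) (-y) := by
  obtain ⟨s, t, ds, dt, hs, ht, htne, rfl, rfl⟩ := h
  exact ⟨-s, t, -ds, dt, rd_neg hKadd hs, ht, htne, by ring, by ring⟩

lemma fd_unique {k : Subfield M} (hkK : k ≤ K) (hkL : k ≤ L)
    (hdisj : ∀ (n : ℕ) (v : Fin n → M), (∀ i, v i ∈ K) →
      (∀ c : Fin n → M, (∀ i, c i ∈ k) → ∑ i, c i * v i = 0 → ∀ i, c i = 0) →
      ∀ c : Fin n → M, (∀ i, c i ∈ L) → ∑ i, c i * v i = 0 → ∀ i, c i = 0)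
    (hKadd : ∀ x y : K, δK (x + y) = δK x + δK y)
    (hKmul : ∀ x y : K, δK (x * y) = δK x * y + x * δK y)
    (hLadd : ∀ x y : L, δL (x + y) = δL x + δL y)
    (hLmul : ∀ x y : L, δL (x * y) = δL x * y + x * δL y)
    (hcompat : ∀ (x : M) (hx : x ∈ k), (δK ⟨x, hkK hx⟩ : M) = (δL ⟨x, hkL hx⟩ : M))
    {x y y' : M} (h : FD K L δK δL x y) (h' : FD K L δK δL x y') : y = y' := by
  obtain ⟨s, t, ds, dt, hs, ht, htne, hx, rfl⟩ := h
  obtain ⟨s', t', ds', dt', hs', ht', htne', hx', rfl⟩ := h'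
  have hst : s * t' = s' * t := by
    rw [hx] at hx'
    field_simp at hx'
    linear_combination hx'
  have h1 : RD K L δK δL (s * t') (s * dt' + ds * t') := rd_mul hKmul hLmul hs ht'
  have h2 : RD K L δK δL (s * t') (s' * dt + ds' * t) := by
    rw [hst]; exact rd_mul hKmul hLmul hs' ht
  have hE : s * dt' + ds * t' = s' * dt + ds' * t :=
    rd_unique hkK hkL hdisj hKadd hKmul hLadd hLmul hcompat h1 h2
  rw [div_eq_div_iff (pow_ne_zero _ htne) (pow_ne_zero _ htne')]
  linear_combination t * t' * hE - (dt * t' + dt' * t) * hst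

lemma fd_total (hKadd : ∀ x y : K, δK (x + y) = δK x + δK y)
    (hKmul : ∀ x y : K, δK (x * y) = δK x * y + x * δK y)
    (hLmul : ∀ x y : L, δL (x * y) = δL x * y + x * δL y)
    {x : M} (hx : x ∈ K ⊔ L) : ∃ y, FD K L δK δL x y := by
  let F : Subfield M :=
    { carrier := {z | ∃ y, FD K L δK δL z y}
      one_mem' := ⟨0, fd_of_rd hKmul hLmul (rd_one hKmul hLmul)⟩
      zero_mem' := ⟨0, fd_of_rd hKmul hLmul rd_zero⟩
      mul_mem' := fun ⟨_, h⟩ ⟨_, h'⟩ => ⟨_, fd_mul hKmul hLmul h h'⟩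
      add_mem' := fun ⟨_, h⟩ ⟨_, h'⟩ => ⟨_, fd_add hKmul hLmul h h'⟩
      neg_mem' := fun ⟨_, h⟩ => ⟨_, fd_neg hKadd h⟩
      inv_mem' := by
        rintro z ⟨y, h⟩
        obtain ⟨s, t, ds, dt, hs, ht, htne, rfl, -⟩ := h
        by_cases hs0 : s = 0
        · exact ⟨0, 0, 1, 0, 0, rd_zero, rd_one hKmul hLmul, one_ne_zero,
            by simp [hs0], by simp⟩
        · exact ⟨(dt * s - t * ds) / s ^ 2, t, s, dt, ds, ht, hs, hs0,
            by rw [inv_div], rfl⟩ }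
  have hKF : K ≤ F := fun a ha => ⟨_, fd_of_rd hKmul hLmul (rd_K hLmul ⟨a, ha⟩)⟩
  have hLF : L ≤ F := fun b hb => ⟨_, fd_of_rd hKmul hLmul (rd_L hKmul ⟨b, hb⟩)⟩
  exact (sup_le hKF hLF) hx
end CompositumDeriv

open CompositumDeriv in
/-- If `K` and `L` are linearly disjoint over a common subfield `k` inside `M`, and `δK`,
`δL` are derivations on `K` and `L` agreeing on `k`, then there is a unique derivation on the
compositum `K ⊔ L` extending both, and it satisfies the product rule
`D(a·b) = δK(a)·b + a·δL(b)` for `a ∈ K`, `b ∈ L`. -/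
theorem derivation_on_compositum_of_linearly_disjoint
    {M : Type*} [Field M] [CharZero M]
    (k K L : Subfield M) (hkK : k ≤ K) (hkL : k ≤ L)
    (hdisj : ∀ (n : ℕ) (v : Fin n → M), (∀ i, v i ∈ K) →
      (∀ c : Fin n → M, (∀ i, c i ∈ k) → ∑ i, c i * v i = 0 → ∀ i, c i = 0) →
      ∀ c : Fin n → M, (∀ i, c i ∈ L) → ∑ i, c i * v i = 0 → ∀ i, c i = 0)
    (δK : K → K)
    (hKadd : ∀ x y, δK (x + y) = δK x + δK y)
    (hKmul : ∀ x y, δK (x * y) = δK x * y + x * δK y)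
    (δL : L → L)
    (hLadd : ∀ x y, δL (x + y) = δL x + δL y)
    (hLmul : ∀ x y, δL (x * y) = δL x * y + x * δL y)
    (hcompat : ∀ (x : M) (hx : x ∈ k),
      (δK ⟨x, hkK hx⟩ : M) = (δL ⟨x, hkL hx⟩ : M)) :
    ∃! D : (K ⊔ L : Subfield M) → (K ⊔ L : Subfield M),
      (∀ x y, D (x + y) = D x + D y) ∧
      (∀ x y, D (x * y) = D x * y + x * D y) ∧
      (∀ (x : M) (hx : x ∈ K),
        (D ⟨x, by exact (le_sup_left : K ≤ K ⊔ L) hx⟩ : M) = δK ⟨x, hx⟩) ∧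
      (∀ (x : M) (hx : x ∈ L),
        (D ⟨x, by exact (le_sup_right : L ≤ K ⊔ L) hx⟩ : M) = δL ⟨x, hx⟩) ∧
      (∀ (a : M) (ha : a ∈ K) (b : M) (hb : b ∈ L),
        (D ⟨a * b, by
            exact mul_mem ((le_sup_left : K ≤ K ⊔ L) ha)
              ((le_sup_right : L ≤ K ⊔ L) hb)⟩ : M) =
          (δK ⟨a, ha⟩ : M) * b + a * (δL ⟨b, hb⟩ : M)) := by
  classical
  have total : ∀ x : (K ⊔ L : Subfield M), ∃ y, FD K L δK δL (x : M) y :=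
    fun x => fd_total hKadd hKmul hLmul x.2
  set D : (K ⊔ L : Subfield M) → (K ⊔ L : Subfield M) := fun x =>
    ⟨Classical.choose (total x), fd_mem_right (Classical.choose_spec (total x))⟩ with hDdef
  have hD : ∀ x : (K ⊔ L : Subfield M), FD K L δK δL (x : M) ((D x : M)) := fun x =>
    Classical.choose_spec (total x)
  have huniq : ∀ {x y y' : M}, FD K L δK δL x y → FD K L δK δL x y' → y = y' :=
    fun h h' => fd_unique hkK hkL hdisj hKadd hKmul hLadd hLmul hcompat h h'
  refine ⟨D, ⟨?_, ?_, ?_, ?_, ?_⟩, ?_⟩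
  · -- additivity
    intro x y
    exact Subtype.ext (huniq (hD (x + y)) (fd_add hKmul hLmul (hD x) (hD y)))
  · -- Leibniz
    intro x y
    apply Subtype.ext
    have h1 := huniq (hD (x * y)) (fd_mul hKmul hLmul (hD x) (hD y))
    show ((D (x * y) : M)) = _
    rw [h1]
    push_cast
    ring
  · -- extends δK
    intro x hx
    exact huniq (hD ⟨x, (le_sup_left : K ≤ K ⊔ L) hx⟩)
      (fd_of_rd hKmul hLmul (rd_K hLmul ⟨x, hx⟩))
  · -- extends δL
    intro x hx
    exact huniq (hD ⟨x, (le_sup_right : L ≤ K ⊔ L) hx⟩)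
      (fd_of_rd hKmul hLmul (rd_L hKmul ⟨x, hx⟩))
  · -- product rule
    intro a ha b hb
    exact huniq (hD ⟨a * b, mul_mem ((le_sup_left : K ≤ K ⊔ L) ha)
        ((le_sup_right : L ≤ K ⊔ L) hb)⟩)
      (fd_of_rd hKmul hLmul (rd_single ⟨a, ha⟩ ⟨b, hb⟩))
  · -- uniqueness
    rintro D' ⟨P1, P2, -, -, P5⟩
    have stepA : ∀ (s y : M) (h : RD K L δK δL s y) (hs : s ∈ K ⊔ L),
        (D' ⟨s, hs⟩ : M) = y := by
      intro s y h hs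
      obtain ⟨n, a, b, hxs, hys⟩ := h
      have hmem : ∀ i, ((a i : M) * (b i : M)) ∈ K ⊔ L := fun i =>
        mul_mem ((le_sup_left : K ≤ K ⊔ L) (a i).2) ((le_sup_right : L ≤ K ⊔ L) (b i).2)
      have hsum : (⟨s, hs⟩ : (K ⊔ L : Subfield M)) =
          ∑ i, (⟨(a i : M) * (b i : M), hmem i⟩ : (K ⊔ L : Subfield M)) := by
        apply Subtype.ext
        push_cast
        exact hxs.symm
      have hmapsum : D' (∑ i, (⟨(a i : M) * (b i : M), hmem i⟩ : (K ⊔ L : Subfield M))) =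
          ∑ i, D' ⟨(a i : M) * (b i : M), hmem i⟩ :=
        map_sum (AddMonoidHom.mk' D' P1) _ univ
      rw [hsum, hmapsum]
      push_cast
      rw [← hys]
      exact Finset.sum_congr rfl fun i _ => P5 (a i) (a i).2 (b i) (b i).2
    funext x
    obtain ⟨s, t, ds, dt, hrds, hrdt, htne, hxst, hyform⟩ := hD x
    have hD'S : (D' ⟨s, rd_mem_left hrds⟩ : M) = ds := stepA s ds hrds _
    have hD'T : (D' ⟨t, rd_mem_left hrdt⟩ : M) = dt := stepA t dt hrdt _
    have hxT : x * ⟨t, rd_mem_left hrdt⟩ = (⟨s, rd_mem_left hrds⟩ : (K ⊔ L : Subfield M)) := by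
      apply Subtype.ext
      show (x : M) * t = s
      rw [hxst]
      field_simp
    have h1 := P2 x ⟨t, rd_mem_left hrdt⟩
    rw [hxT] at h1
    have h1' : ds = (D' x : M) * t + (s / t) * dt := by
      have h2 := congrArg (Subtype.val) h1
      push_cast at h2
      rw [hD'S, hD'T, hxst] at h2
      exact h2
    apply Subtype.ext
    show (D' x : M) = (D x : M)
    rw [hyform, eq_div_iff (pow_ne_zero 2 htne)]
    field_simp at h1'
    linear_combination -h1'
end
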